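/- arXiv:1403.7908 — 4 statements merged into one kernel-verified Lean document; each statement's English description precedes it below -/
import Mathlib

section
/- For a unit-speed Frenet curve α in ℝⁿ, the differential dσᵢ = √(κ_{i-1}(s)² + κᵢ(s)²) ds (the arc length element of the spherical Vᵢ-indicatrix) is invariant under direct similarities: if ᾱ = F ∘ α with F a direct similarity, then √(κ̄_{i-1}² + κ̄ᵢ²) ds̄ = √(κ_{i-1}² + κᵢ²) ds. -/
/-- For a unit-speed Frenet curve α in ℝⁿ with curvatures κⱼ (κ₀ = κₙ = 0), the
arc length element `dσᵢ = √(κ_{i-1}² + κᵢ²) ds` of the spherical Vᵢ-indicatrix is invariant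
under direct similarities: for `ᾱ = F ∘ α` (with curvatures `κ̄ⱼ(s̄) = κⱼ(s)/λ` and arc length
`s̄ = λ s`, so `ds̄ = λ ds`), one has `√(κ̄_{i-1}(s̄)² + κ̄ᵢ(s̄)²) · λ = √(κ_{i-1}(s)² + κᵢ(s)²)`. -/
theorem indicatrix_arclength_element_invariant {n : ℕ} (lam : ℝ) (hlam : 0 < lam)
    (κ κbar : ℕ → ℝ → ℝ)
    (hκ0 : ∀ s, κ 0 s = 0) (hκn : ∀ s, κ n s = 0)
    (hscale : ∀ j t, κbar j t = κ j (t / lam) / lam)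
    (i : ℕ) (hi : 1 ≤ i) (hin : i ≤ n) :
    ∀ s, Real.sqrt ((κbar (i-1) (lam * s))^2 + (κbar i (lam * s))^2) * lam =
      Real.sqrt ((κ (i-1) s)^2 + (κ i s)^2) := by
  intro s
  have hne : lam ≠ 0 := ne_of_gt hlam
  have hdiv : lam * s / lam = s := by field_simp
  rw [hscale, hscale, hdiv]
  have h1 : (κ (i-1) s / lam)^2 + (κ i s / lam)^2 = ((κ (i-1) s)^2 + (κ i s)^2) / lam^2 := by
    ring
  rw [h1, Real.sqrt_div (by positivity) _, Real.sqrt_sq hlam.le]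
  field_simp
end

section
/- For a unit-speed Frenet curve α in ℝⁿ with spherical Vᵢ-indicatrix arc length σᵢ (dσᵢ/ds = √(κ_{i-1}² + κᵢ²)), the shape curvatures κ̃(σᵢ) = -(d/dσᵢ) log √(κ_{i-1}² + κᵢ²) and κ̃ⱼ(σᵢ) = κⱼ/√(κ_{i-1}² + κᵢ²), j = 1,…,n-1, are invariant under direct similarities: the corresponding functions for ᾱ = F ∘ α coincide with those of α at corresponding parameter values. -/
/-- The shape curvatures
`κ̃ = -(d/dσᵢ) log √(κ_{i-1}² + κᵢ²)` (equivalently, writing `q = √(κ_{i-1}² + κᵢ²)` and using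
`d/dσᵢ = (1/q) d/ds`, `κ̃(s) = -(q'(s))/(q(s))²`) and `κ̃ⱼ = κⱼ/√(κ_{i-1}² + κᵢ²)`
are invariant under direct similarities: the corresponding functions for `ᾱ = F ∘ α`
(whose curvatures satisfy `κ̄ⱼ(s̄) = κⱼ(s)/λ` with `s̄ = λ s`) coincide with those of α
at corresponding parameter values. -/
theorem shape_curvatures_invariant {n : ℕ} (lam : ℝ) (hlam : 0 < lam)
    (κ κbar : ℕ → ℝ → ℝ)
    (hκ0 : ∀ s, κ 0 s = 0) (hκn : ∀ s, κ n s = 0)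
    (hdiff : ∀ j, Differentiable ℝ (κ j))
    (hscale : ∀ j t, κbar j t = κ j (t / lam) / lam)
    (i : ℕ) (hi : 1 ≤ i) (hin : i ≤ n)
    (hq : ∀ s, 0 < (κ (i-1) s)^2 + (κ i s)^2) :
    (∀ s,
      -(deriv (fun t => Real.sqrt ((κbar (i-1) t)^2 + (κbar i t)^2)) (lam * s)) /
          (Real.sqrt ((κbar (i-1) (lam * s))^2 + (κbar i (lam * s))^2))^2 =
        -(deriv (fun t => Real.sqrt ((κ (i-1) t)^2 + (κ i t)^2)) s) /
          (Real.sqrt ((κ (i-1) s)^2 + (κ i s)^2))^2) ∧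
    (∀ j, 1 ≤ j → j ≤ n - 1 → ∀ s,
      κbar j (lam * s) / Real.sqrt ((κbar (i-1) (lam * s))^2 + (κbar i (lam * s))^2) =
        κ j s / Real.sqrt ((κ (i-1) s)^2 + (κ i s)^2)) := by
  have hlam' : lam ≠ 0 := ne_of_gt hlam
  set Q : ℝ → ℝ := fun s => Real.sqrt ((κ (i-1) s)^2 + (κ i s)^2) with hQ
  have hQpos : ∀ s, 0 < Q s := fun s => Real.sqrt_pos.mpr (hq s)
  -- qbar rewriting
  have hbar : ∀ t, Real.sqrt ((κbar (i-1) t)^2 + (κbar i t)^2) = Q (t / lam) / lam := by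
    intro t
    rw [hscale, hscale]
    have : (κ (i-1) (t/lam) / lam)^2 + (κ i (t/lam) / lam)^2
        = ((κ (i-1) (t/lam))^2 + (κ i (t/lam))^2) / lam^2 := by ring
    rw [this, Real.sqrt_div ((hq _).le), Real.sqrt_sq hlam.le]
  have hQd : ∀ s, DifferentiableAt ℝ Q s := by
    intro s
    exact DifferentiableAt.sqrt
      (((hdiff (i-1)).differentiableAt.pow 2).add ((hdiff i).differentiableAt.pow 2))
      (ne_of_gt (hq s))
  constructor
  · intro s
    have hms : lam * s / lam = s := by field_simp
    have hfun : (fun t => Real.sqrt ((κbar (i-1) t)^2 + (κbar i t)^2)) = fun t => Q (t/lam) / lam :=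
      funext hbar
    have h1 : HasDerivAt (fun t => Q (t/lam) / lam) (deriv Q s * (1/lam) / lam) (lam * s) := by
      have hg : HasDerivAt (fun t : ℝ => t / lam) (1/lam) (lam * s) := by
        simpa using (hasDerivAt_id (lam*s)).div_const lam
      have h2 : HasDerivAt Q (deriv Q s) (lam * s / lam) := by
        rw [hms]; exact (hQd s).hasDerivAt
      exact (h2.comp (lam*s) hg).div_const lam
    rw [hfun, h1.deriv, hbar, hms]
    have hQs := (hQpos s).ne'
    show -(deriv Q s * (1/lam) / lam) / (Q s / lam) ^ 2 = -deriv Q s / Q s ^ 2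
    rw [div_pow]
    field_simp
  · intro j _ _ s
    have hms : lam * s / lam = s := by field_simp
    rw [hbar, hscale, hms]
    show _ = κ j s / Q s
    have := (hQpos s).ne'
    field_simp
end

section
/- Let α be a unit-speed Frenet curve in ℝ³ with κ₁ > 0 and shape curvatures κ̃₁ = (1/κ₁)' (derivative with respect to arc length s) and κ̃₂ = κ₂/κ₁. If the evolute coefficients are m₁(s) = 1/κ₁(s) and m₂(s) = (1/κ₁(s)) cot(∫ κ₂(s) ds), then κ̃₁ = m₁' and κ̃₂ = m₁ (m₁' m₂ - m₁ m₂') / (m₁² + m₂²). -/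
/-- For a unit-speed Frenet curve in ℝ³ with κ₁ > 0 and evolute coefficients
`m₁ = 1/κ₁`, `m₂ = (1/κ₁) cot(∫ κ₂ ds)`, the shape curvatures `κ̃₁ = (1/κ₁)'`, `κ̃₂ = κ₂/κ₁`
satisfy `κ̃₁ = m₁'` and `κ̃₂ = m₁ (m₁' m₂ - m₁ m₂') / (m₁² + m₂²)`. Here `K` is an
antiderivative of κ₂ (so `∫ κ₂ ds = K`). -/
theorem shape_curvatures_from_evolute
    (κ₁ κ₂ K : ℝ → ℝ)
    (hκ₁pos : ∀ s, 0 < κ₁ s)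
    (hκ₂ne : ∀ s, κ₂ s ≠ 0)
    (hκ₁diff : Differentiable ℝ κ₁)
    (hK : ∀ s, HasDerivAt K (κ₂ s) s)
    (hsin : ∀ s, Real.sin (K s) ≠ 0)
    (m₁ m₂ : ℝ → ℝ)
    (hm₁ : m₁ = fun s => 1 / κ₁ s)
    (hm₂ : m₂ = fun s => (1 / κ₁ s) * (Real.cos (K s) / Real.sin (K s))) :
    (∀ s, deriv (fun t => 1 / κ₁ t) s = deriv m₁ s) ∧
    (∀ s, κ₂ s / κ₁ s =
      m₁ s * (deriv m₁ s * m₂ s - m₁ s * deriv m₂ s) / ((m₁ s)^2 + (m₂ s)^2)) := by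
  constructor
  · intro s; rw [hm₁]
  · intro s
    have hκne : κ₁ s ≠ 0 := (hκ₁pos s).ne'
    have hs : Real.sin (K s) ≠ 0 := hsin s
    -- derivative of m₁
    have h1 : HasDerivAt m₁ (deriv m₁ s) s := by
      apply DifferentiableAt.hasDerivAt
      rw [hm₁]
      exact (differentiableAt_const 1).div (hκ₁diff s) hκne
    -- derivative of cot ∘ K
    have hc : HasDerivAt (fun t => Real.cos (K t) / Real.sin (K t))
        (-(κ₂ s) / (Real.sin (K s))^2) s := by
      have hcos : HasDerivAt (fun t => Real.cos (K t)) (-Real.sin (K s) * κ₂ s) s :=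
        (Real.hasDerivAt_cos (K s)).comp s (hK s)
      have hsin' : HasDerivAt (fun t => Real.sin (K t)) (Real.cos (K s) * κ₂ s) s :=
        (Real.hasDerivAt_sin (K s)).comp s (hK s)
      have := hcos.div hsin' hs
      refine this.congr_deriv ?_
      have hpy := Real.sin_sq_add_cos_sq (K s)
      rw [div_left_inj' (pow_ne_zero 2 hs)]
      linear_combination (-κ₂ s) * hpy
    -- derivative of m₂
    have h2 : HasDerivAt m₂
        (deriv m₁ s * (Real.cos (K s) / Real.sin (K s))
          + m₁ s * (-(κ₂ s) / (Real.sin (K s))^2)) s := by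
      have : m₂ = fun t => m₁ t * (Real.cos (K t) / Real.sin (K t)) := by
        rw [hm₂, hm₁]
      rw [this]
      exact h1.mul hc
    rw [h2.deriv]
    have hm1s : m₁ s = 1 / κ₁ s := by rw [hm₁]
    have hm2s : m₂ s = (1 / κ₁ s) * (Real.cos (K s) / Real.sin (K s)) := by rw [hm₂]
    rw [hm1s, hm2s]
    have hpy := Real.sin_sq_add_cos_sq (K s)
    have hden : (1 / κ₁ s)^2 + ((1 / κ₁ s) * (Real.cos (K s) / Real.sin (K s)))^2 ≠ 0 := by
      positivity
    field_simp
    linear_combination (κ₂ s) * hpy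
end

section
/- Let α be a unit-speed curve in ℝ³ with κ₁ > 0, κ₂ ≠ 0, reparametrized by the arc length σ₂ of its principal normal indicatrix (dσ₂/ds = √(κ₁² + κ₂²)), with shape curvatures κ̃₁ = κ₁/√(κ₁² + κ₂²) and κ̃₂ = κ₂/√(κ₁² + κ₂²). Then the geodesic curvature of the principal normal indicatrix equals κ̃₁² · d(κ̃₂/κ̃₁)/dσ₂, i.e. equals (κ₁² / (κ₁² + κ₂²)) · d(κ₂/κ₁)/dσ₂. -/
/-- Cross product on Euclidean 3-space. -/
noncomputable def cross3 (u v : EuclideanSpace ℝ (Fin 3)) : EuclideanSpace ℝ (Fin 3) :=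
  (WithLp.equiv 2 (Fin 3 → ℝ)).symm
    (crossProduct ((WithLp.equiv 2 (Fin 3 → ℝ)) u) ((WithLp.equiv 2 (Fin 3 → ℝ)) v))

/-- Scalar triple product (determinant of the three vectors as rows). -/
noncomputable def det3 (u v w : EuclideanSpace ℝ (Fin 3)) : ℝ :=
  Matrix.det (Matrix.of ![(WithLp.equiv 2 (Fin 3 → ℝ)) u,
    (WithLp.equiv 2 (Fin 3 → ℝ)) v, (WithLp.equiv 2 (Fin 3 → ℝ)) w])


lemma key_det (V₁ V₂ : EuclideanSpace ℝ (Fin 3)) (h1 : ‖V₁‖ = 1) (h2 : ‖V₂‖ = 1)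
    (ho : (inner ℝ V₁ V₂ : ℝ) = 0) (a c x y z : ℝ) :
    det3 V₂ (a • V₁ + c • cross3 V₁ V₂) (x • V₁ + y • V₂ + z • cross3 V₁ V₂) = c * x - a * z := by
  have hs1 : V₁ 0 * V₁ 0 + V₁ 1 * V₁ 1 + V₁ 2 * V₁ 2 = 1 := by
    have := real_inner_self_eq_norm_sq V₁
    rw [h1, PiLp.inner_apply] at this
    simpa [Fin.sum_univ_three, RCLike.inner_apply, sq] using this
  have hs2 : V₂ 0 * V₂ 0 + V₂ 1 * V₂ 1 + V₂ 2 * V₂ 2 = 1 := by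
    have := real_inner_self_eq_norm_sq V₂
    rw [h2, PiLp.inner_apply] at this
    simpa [Fin.sum_univ_three, RCLike.inner_apply, sq] using this
  have hp : V₁ 0 * V₂ 0 + V₁ 1 * V₂ 1 + V₁ 2 * V₂ 2 = 0 := by
    simpa [PiLp.inner_apply, Fin.sum_univ_three, RCLike.inner_apply, mul_comm] using ho
  simp only [det3, cross3, Matrix.det_fin_three, Matrix.of_apply, Matrix.cons_val', cross_apply]
  simp [Fin.sum_univ_three]
  linear_combination (c*x-a*z)*(V₂ 0 * V₂ 0 + V₂ 1 * V₂ 1 + V₂ 2 * V₂ 2)*hs1 +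
    (c*x-a*z)*hs2 - (c*x-a*z)*(V₁ 0 * V₂ 0 + V₁ 1 * V₂ 1 + V₁ 2 * V₂ 2)*hp

/-- For a unit-speed Frenet curve in ℝ³ with κ₁ > 0, κ₂ ≠ 0, the geodesic
curvature of its principal normal indicatrix `γ = V₂` (parametrized by its arc length σ₂,
`dσ₂/ds = √(κ₁² + κ₂²)`, with inverse reparametrization τ) equals
`κ̃₁² · d(κ̃₂/κ̃₁)/dσ₂ = (κ₁²/(κ₁² + κ₂²)) · d(κ₂/κ₁)/dσ₂`. -/
theorem geodesic_curvature_normal_indicatrix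
    (α V₁ V₂ V₃ : ℝ → EuclideanSpace ℝ (Fin 3)) (κ₁ κ₂ : ℝ → ℝ)
    (hκ₁pos : ∀ s, 0 < κ₁ s) (hκ₂ne : ∀ s, κ₂ s ≠ 0)
    (hκ₁diff : Differentiable ℝ κ₁) (hκ₂diff : Differentiable ℝ κ₂)
    (htangent : ∀ s, HasDerivAt α (V₁ s) s)
    (hfrenet1 : ∀ s, HasDerivAt V₁ (κ₁ s • V₂ s) s)
    (hfrenet2 : ∀ s, HasDerivAt V₂ ((-(κ₁ s)) • V₁ s + κ₂ s • V₃ s) s)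
    (hfrenet3 : ∀ s, HasDerivAt V₃ ((-(κ₂ s)) • V₂ s) s)
    (hV₁unit : ∀ s, ‖V₁ s‖ = 1) (hV₂unit : ∀ s, ‖V₂ s‖ = 1)
    (horth : ∀ s, (inner ℝ (V₁ s) (V₂ s) : ℝ) = 0)
    (hV₃ : ∀ s, V₃ s = cross3 (V₁ s) (V₂ s))
    -- σ₂ is the arc length of the principal normal indicatrix and τ its inverse :
    (σ₂ τ : ℝ → ℝ)
    (hσ₂ : ∀ s, HasDerivAt σ₂ (Real.sqrt ((κ₁ s)^2 + (κ₂ s)^2)) s)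
    (hinv : Function.LeftInverse τ σ₂ ∧ Function.RightInverse τ σ₂)
    (hτ : ∀ u, HasDerivAt τ (1 / Real.sqrt ((κ₁ (τ u))^2 + (κ₂ (τ u))^2)) u)
    (γ : ℝ → EuclideanSpace ℝ (Fin 3)) (hγ : γ = V₂ ∘ τ) :
    ∀ u, det3 (γ u) (deriv γ u) (deriv (deriv γ) u) =
      ((κ₁ (τ u))^2 / ((κ₁ (τ u))^2 + (κ₂ (τ u))^2)) *
        deriv (fun w => κ₂ (τ w) / κ₁ (τ w)) u := by

  intro u
  obtain ⟨hli, hri⟩ := hinv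
  have hQpos : ∀ t, 0 < (κ₁ t) ^ 2 + (κ₂ t) ^ 2 := fun t =>
    add_pos_of_pos_of_nonneg (pow_pos (hκ₁pos t) 2) (sq_nonneg _)
  have hRpos : ∀ t, 0 < Real.sqrt ((κ₁ t) ^ 2 + (κ₂ t) ^ 2) := fun t => Real.sqrt_pos.2 (hQpos t)
  have hRne : ∀ t, Real.sqrt ((κ₁ t) ^ 2 + (κ₂ t) ^ 2) ≠ 0 := fun t => ne_of_gt (hRpos t)
  have hq : ∀ t, HasDerivAt (fun r => (κ₁ r) ^ 2 + (κ₂ r) ^ 2)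
      (2 * κ₁ t * deriv κ₁ t + 2 * κ₂ t * deriv κ₂ t) t := by
    intro t
    have h1 := (hκ₁diff t).hasDerivAt.pow 2
    have h2 := (hκ₂diff t).hasDerivAt.pow 2
    refine (h1.add h2).congr_deriv ?_
    push_cast
    ring
  have hR : ∀ t, HasDerivAt (fun r => Real.sqrt ((κ₁ r) ^ 2 + (κ₂ r) ^ 2))
      ((κ₁ t * deriv κ₁ t + κ₂ t * deriv κ₂ t) / Real.sqrt ((κ₁ t) ^ 2 + (κ₂ t) ^ 2)) t := by
    intro t
    have h := (Real.hasDerivAt_sqrt (ne_of_gt (hQpos t))).comp t (hq t)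
    refine h.congr_deriv ?_
    field_simp
  -- first derivative of γ
  have hγ' : ∀ w, HasDerivAt γ
      ((1 / Real.sqrt ((κ₁ (τ w)) ^ 2 + (κ₂ (τ w)) ^ 2)) •
        ((-(κ₁ (τ w))) • V₁ (τ w) + κ₂ (τ w) • V₃ (τ w))) w := by
    intro w
    rw [hγ]
    exact (hfrenet2 (τ w)).scomp w (hτ w)
  have hdγ : deriv γ = fun w =>
      ((-(κ₁ (τ w))) / Real.sqrt ((κ₁ (τ w)) ^ 2 + (κ₂ (τ w)) ^ 2)) • V₁ (τ w) +
      ((κ₂ (τ w)) / Real.sqrt ((κ₁ (τ w)) ^ 2 + (κ₂ (τ w)) ^ 2)) • V₃ (τ w) := by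
    funext w
    rw [(hγ' w).deriv, smul_add, smul_smul, smul_smul, one_div, inv_mul_eq_div, inv_mul_eq_div]
  -- derivatives of the coefficient functions
  have hAτ : HasDerivAt (fun w =>
      (-(κ₁ (τ w))) / Real.sqrt ((κ₁ (τ w)) ^ 2 + (κ₂ (τ w)) ^ 2)) ((((-(deriv κ₁ (τ u))) * (Real.sqrt ((κ₁ (τ u)) ^ 2 + (κ₂ (τ u)) ^ 2)) - (-(κ₁ (τ u))) * (((κ₁ (τ u)) * (deriv κ₁ (τ u)) + (κ₂ (τ u)) * (deriv κ₂ (τ u))) / (Real.sqrt ((κ₁ (τ u)) ^ 2 + (κ₂ (τ u)) ^ 2)))) / (Real.sqrt ((κ₁ (τ u)) ^ 2 + (κ₂ (τ u)) ^ 2)) ^ 2) * (1 / (Real.sqrt ((κ₁ (τ u)) ^ 2 + (κ₂ (τ u)) ^ 2)))) u := by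
    have hf : HasDerivAt (fun t => (-(κ₁ t)) / Real.sqrt ((κ₁ t) ^ 2 + (κ₂ t) ^ 2))
        (((-(deriv κ₁ (τ u))) * (Real.sqrt ((κ₁ (τ u)) ^ 2 + (κ₂ (τ u)) ^ 2)) - (-(κ₁ (τ u))) * (((κ₁ (τ u)) * (deriv κ₁ (τ u)) + (κ₂ (τ u)) * (deriv κ₂ (τ u))) / (Real.sqrt ((κ₁ (τ u)) ^ 2 + (κ₂ (τ u)) ^ 2)))) / (Real.sqrt ((κ₁ (τ u)) ^ 2 + (κ₂ (τ u)) ^ 2)) ^ 2) (τ u) := (hκ₁diff (τ u)).hasDerivAt.neg.div (hR (τ u)) (hRne (τ u))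
    simpa [Function.comp_def] using hf.comp u (hτ u)
  have hCτ : HasDerivAt (fun w =>
      (κ₂ (τ w)) / Real.sqrt ((κ₁ (τ w)) ^ 2 + (κ₂ (τ w)) ^ 2)) (((((deriv κ₂ (τ u))) * (Real.sqrt ((κ₁ (τ u)) ^ 2 + (κ₂ (τ u)) ^ 2)) - (κ₂ (τ u)) * (((κ₁ (τ u)) * (deriv κ₁ (τ u)) + (κ₂ (τ u)) * (deriv κ₂ (τ u))) / (Real.sqrt ((κ₁ (τ u)) ^ 2 + (κ₂ (τ u)) ^ 2)))) / (Real.sqrt ((κ₁ (τ u)) ^ 2 + (κ₂ (τ u)) ^ 2)) ^ 2) * (1 / (Real.sqrt ((κ₁ (τ u)) ^ 2 + (κ₂ (τ u)) ^ 2)))) u := by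
    have hf : HasDerivAt (fun t => (κ₂ t) / Real.sqrt ((κ₁ t) ^ 2 + (κ₂ t) ^ 2))
        ((((deriv κ₂ (τ u))) * (Real.sqrt ((κ₁ (τ u)) ^ 2 + (κ₂ (τ u)) ^ 2)) - (κ₂ (τ u)) * (((κ₁ (τ u)) * (deriv κ₁ (τ u)) + (κ₂ (τ u)) * (deriv κ₂ (τ u))) / (Real.sqrt ((κ₁ (τ u)) ^ 2 + (κ₂ (τ u)) ^ 2)))) / (Real.sqrt ((κ₁ (τ u)) ^ 2 + (κ₂ (τ u)) ^ 2)) ^ 2) (τ u) := (hκ₂diff (τ u)).hasDerivAt.div (hR (τ u)) (hRne (τ u))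
    simpa [Function.comp_def] using hf.comp u (hτ u)
  have hV1τ : HasDerivAt (fun w => V₁ (τ w))
      ((1 / (Real.sqrt ((κ₁ (τ u)) ^ 2 + (κ₂ (τ u)) ^ 2))) • (κ₁ (τ u) • V₂ (τ u))) u := by
    simpa [Function.comp_def] using (hfrenet1 (τ u)).scomp u (hτ u)
  have hV3τ : HasDerivAt (fun w => V₃ (τ w))
      ((1 / (Real.sqrt ((κ₁ (τ u)) ^ 2 + (κ₂ (τ u)) ^ 2))) • ((-(κ₂ (τ u))) • V₂ (τ u))) u := by
    simpa [Function.comp_def] using (hfrenet3 (τ u)).scomp u (hτ u)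
  have hsum := (hAτ.smul hV1τ).add (hCτ.smul hV3τ)
  have e1 : γ u = V₂ (τ u) := by rw [hγ]; rfl
  have e2 : deriv γ u = ((-(κ₁ (τ u))) / (Real.sqrt ((κ₁ (τ u)) ^ 2 + (κ₂ (τ u)) ^ 2))) • V₁ (τ u) + ((κ₂ (τ u)) / (Real.sqrt ((κ₁ (τ u)) ^ 2 + (κ₂ (τ u)) ^ 2))) • V₃ (τ u) := by rw [hdγ]
  have e3 : deriv (deriv γ) u =
      (((-(κ₁ (τ u))) / (Real.sqrt ((κ₁ (τ u)) ^ 2 + (κ₂ (τ u)) ^ 2))) • ((1 / (Real.sqrt ((κ₁ (τ u)) ^ 2 + (κ₂ (τ u)) ^ 2))) • (κ₁ (τ u) • V₂ (τ u))) + ((((-(deriv κ₁ (τ u))) * (Real.sqrt ((κ₁ (τ u)) ^ 2 + (κ₂ (τ u)) ^ 2)) - (-(κ₁ (τ u))) * (((κ₁ (τ u)) * (deriv κ₁ (τ u)) + (κ₂ (τ u)) * (deriv κ₂ (τ u))) / (Real.sqrt ((κ₁ (τ u)) ^ 2 + (κ₂ (τ u)) ^ 2)))) / (Real.sqrt ((κ₁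 (τ u)) ^ 2 + (κ₂ (τ u)) ^ 2)) ^ 2) * (1 / (Real.sqrt ((κ₁ (τ u)) ^ 2 + (κ₂ (τ u)) ^ 2)))) • V₁ (τ u)) +
      (((κ₂ (τ u)) / (Real.sqrt ((κ₁ (τ u)) ^ 2 + (κ₂ (τ u)) ^ 2))) • ((1 / (Real.sqrt ((κ₁ (τ u)) ^ 2 + (κ₂ (τ u)) ^ 2))) • ((-(κ₂ (τ u))) • V₂ (τ u))) + (((((deriv κ₂ (τ u))) * (Real.sqrt ((κ₁ (τ u)) ^ 2 + (κ₂ (τ u)) ^ 2)) - (κ₂ (τ u)) * (((κ₁ (τ u)) * (deriv κ₁ (τ u)) + (κ₂ (τ u)) * (deriv κ₂ (τ u))) / (Real.sqrt ((κ₁ (τ u)) ^ 2 + (κ₂ (τ u)) ^ 2)))) / (Real.sqrt ((κ₁ (τ u)) ^ 2 + (κ₂ (τ u)) ^ 2)) ^ 2) * (1 / (Real.sqrt ((κ₁ (τ u)) ^ 2 + (κ₂ (τ u)) ^ 2)))) • V₃ (τ u)) := by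
    rw [hdγ]
    exact hsum.deriv
  have hrat : HasDerivAt (fun w => κ₂ (τ w) / κ₁ (τ w))
      (((deriv κ₂ (τ u) * κ₁ (τ u) - κ₂ (τ u) * deriv κ₁ (τ u)) / (κ₁ (τ u)) ^ 2) *
        (1 / (Real.sqrt ((κ₁ (τ u)) ^ 2 + (κ₂ (τ u)) ^ 2)))) u := by
    have hf : HasDerivAt (fun t => κ₂ t / κ₁ t)
        ((deriv κ₂ (τ u) * κ₁ (τ u) - κ₂ (τ u) * deriv κ₁ (τ u)) / (κ₁ (τ u)) ^ 2) (τ u) :=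
      (hκ₂diff (τ u)).hasDerivAt.div (hκ₁diff (τ u)).hasDerivAt (ne_of_gt (hκ₁pos (τ u)))
    simpa [Function.comp_def] using hf.comp u (hτ u)
  rw [e1, e2, e3, hrat.deriv, hV₃ (τ u)]
  have hvec : (((-(κ₁ (τ u))) / (Real.sqrt ((κ₁ (τ u)) ^ 2 + (κ₂ (τ u)) ^ 2))) • ((1 / (Real.sqrt ((κ₁ (τ u)) ^ 2 + (κ₂ (τ u)) ^ 2))) • (κ₁ (τ u) • V₂ (τ u))) + ((((-(deriv κ₁ (τ u))) * (Real.sqrt ((κ₁ (τ u)) ^ 2 + (κ₂ (τ u)) ^ 2)) - (-(κ₁ (τ u))) * (((κ₁ (τ u)) * (deriv κ₁ (τ u)) + (κ₂ (τ u)) * (deriv κ₂ (τ u))) / (Real.sqrt ((κ₁ (τ u)) ^ 2 + (κ₂ (τ u)) ^ 2)))) / (Real.sqrt ((κ₁ (τ u)) ^ 2 + (κ₂ (τ u)) ^ 2)) ^ 2) * (1 / (Real.sqrt ((κ₁ (τ u)) ^ 2 + (κ₂ (τ u)) ^ 2)))) • V₁ (τ u)) +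
      (((κ₂ (τ u)) / (Real.sqrt ((κ₁ (τ u)) ^ 2 + (κ₂ (τ u)) ^ 2))) • ((1 / (Real.sqrt ((κ₁ (τ u)) ^ 2 + (κ₂ (τ u)) ^ 2))) • ((-(κ₂ (τ u))) • V₂ (τ u))) +
        (((((deriv κ₂ (τ u))) * (Real.sqrt ((κ₁ (τ u)) ^ 2 + (κ₂ (τ u)) ^ 2)) - (κ₂ (τ u)) * (((κ₁ (τ u)) * (deriv κ₁ (τ u)) + (κ₂ (τ u)) * (deriv κ₂ (τ u))) / (Real.sqrt ((κ₁ (τ u)) ^ 2 + (κ₂ (τ u)) ^ 2)))) / (Real.sqrt ((κ₁ (τ u)) ^ 2 + (κ₂ (τ u)) ^ 2)) ^ 2) * (1 / (Real.sqrt ((κ₁ (τ u)) ^ 2 + (κ₂ (τ u)) ^ 2)))) • cross3 (V₁ (τ u)) (V₂ (τ u))) =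
      ((((-(deriv κ₁ (τ u))) * (Real.sqrt ((κ₁ (τ u)) ^ 2 + (κ₂ (τ u)) ^ 2)) - (-(κ₁ (τ u))) * (((κ₁ (τ u)) * (deriv κ₁ (τ u)) + (κ₂ (τ u)) * (deriv κ₂ (τ u))) / (Real.sqrt ((κ₁ (τ u)) ^ 2 + (κ₂ (τ u)) ^ 2)))) / (Real.sqrt ((κ₁ (τ u)) ^ 2 + (κ₂ (τ u)) ^ 2)) ^ 2) * (1 / (Real.sqrt ((κ₁ (τ u)) ^ 2 + (κ₂ (τ u)) ^ 2)))) • V₁ (τ u) + (((-(κ₁ (τ u))) / (Real.sqrt ((κ₁ (τ u)) ^ 2 + (κ₂ (τ u)) ^ 2))) * ((1 / (Real.sqrt ((κ₁ (τ u)) ^ 2 + (κ₂ (τ u)) ^ 2))) * (κ₁ (τ u))) + ((κ₂ (τ u)) / (Real.sqrt ((κ₁ (τ u)) ^ 2 + (κ₂ (τ u)) ^ 2))) * ((1 / (Real.sqrt ((κ₁ (τ u)) ^ 2 + (κ₂ (τ u)) ^ 2))) * (-(κ₂ (τ u))))) • V₂ (τ u) + (((((deriv κ₂ (τ u))) * (Real.sqrt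 ((κ₁ (τ u)) ^ 2 + (κ₂ (τ u)) ^ 2)) - (κ₂ (τ u)) * (((κ₁ (τ u)) * (deriv κ₁ (τ u)) + (κ₂ (τ u)) * (deriv κ₂ (τ u))) / (Real.sqrt ((κ₁ (τ u)) ^ 2 + (κ₂ (τ u)) ^ 2)))) / (Real.sqrt ((κ₁ (τ u)) ^ 2 + (κ₂ (τ u)) ^ 2)) ^ 2) * (1 / (Real.sqrt ((κ₁ (τ u)) ^ 2 + (κ₂ (τ u)) ^ 2)))) • cross3 (V₁ (τ u)) (V₂ (τ u)) := by
    module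
  rw [hvec, key_det (V₁ (τ u)) (V₂ (τ u)) (hV₁unit (τ u)) (hV₂unit (τ u)) (horth (τ u))]
  have hsq : (Real.sqrt ((κ₁ (τ u)) ^ 2 + (κ₂ (τ u)) ^ 2)) ^ 2 = (κ₁ (τ u)) ^ 2 + (κ₂ (τ u)) ^ 2 := Real.sq_sqrt (le_of_lt (hQpos (τ u)))
  rw [← hsq]
  have hk1 : κ₁ (τ u) ≠ 0 := ne_of_gt (hκ₁pos (τ u))
  field_simp
  simp only [Real.sqrt_sq (Real.sqrt_nonneg _)]
  ring
end
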